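/- Let V = {1,…,n}, let λ = (λ_1,…,λ_k) be an integer sequence with 1 < λ_1 < ⋯ < λ_k ≤ n satisfying λ_{i+1} − λ_i ≤ λ_1 for all i = 1,…,k−1 and λ_1 + λ_k = n, and let 𝓗 = 𝓗(λ). Then for every long position x ∈ ℤ_{≥0}^V and every integer z with m(x) ≤ z < 𝒯_𝓗(x), there exists a move x → x' such that x' is long and 𝒯_𝓗(x') = z. -/

import Mathlib

open Finset

/-- An `H`-move in hypergraph NIM: strictly decrease every pile in `H`, keep others. -/
def HMove {n : ℕ} (H : Finset (Fin n)) (x x' : Fin n → ℕ) : Prop :=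
  (∀ i ∈ H, x' i < x i) ∧ ∀ i ∉ H, x' i = x i

/-- A move in `NIM_𝓗`: an `H`-move for some hyperedge `H ∈ 𝓗`. -/
def Move {n : ℕ} (F : Set (Finset (Fin n))) (x x' : Fin n → ℕ) : Prop :=
  ∃ H ∈ F, HMove H x x'

/-- Minimal excludant of a set of naturals. -/
noncomputable def mex (S : Set ℕ) : ℕ := sInf {g : ℕ | g ∉ S}

/-- The Sprague–Grundy function of `NIM_𝓗`, defined by well-founded recursion.
(The guard `∑ x' < ∑ x` is automatic whenever `∅ ∉ 𝓗`.) -/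
noncomputable def grundy {n : ℕ} (F : Set (Finset (Fin n))) (x : Fin n → ℕ) : ℕ :=
  mex {g : ℕ | ∃ x', ∃ _h : Move F x x' ∧ (∑ i, x' i) < ∑ i, x i, grundy F x' = g}
termination_by ∑ i, x i
decreasing_by exact _h.2

/-- `N` consecutive moves are possible from `x`: there are hyperedges `H¹,…,H^N ∈ 𝓗`
whose partial sums of characteristic vectors stay `≤ x`. -/
def TetrisReach {n : ℕ} (F : Set (Finset (Fin n))) (x : Fin n → ℕ) (N : ℕ) : Prop :=
  ∃ f : ℕ → Finset (Fin n), (∀ j < N, f j ∈ F) ∧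
    ∀ j < N, ∀ i, (∑ l ∈ Finset.range (j + 1), if i ∈ f l then 1 else 0) ≤ x i

/-- The Tetris function: the largest `N` with `TetrisReach`. -/
noncomputable def tetris {n : ℕ} (F : Set (Finset (Fin n))) (x : Fin n → ℕ) : ℕ :=
  sSup {N | TetrisReach F x N}

/-- `m(x)`: the minimum pile size. -/
noncomputable def mval {n : ℕ} (x : Fin n → ℕ) : ℕ := sInf (Set.range x)

/-- `y_𝓗(x) = 𝒯_𝓗(x − m(x)e) + 1`. -/
noncomputable def yval {n : ℕ} (F : Set (Finset (Fin n))) (x : Fin n → ℕ) : ℕ :=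
  tetris F (fun i => x i - mval x) + 1

/-- `v_𝓗(x)`. -/
noncomputable def vval {n : ℕ} (F : Set (Finset (Fin n))) (x : Fin n → ℕ) : ℕ :=
  Nat.choose (yval F x) 2 + ((mval x - Nat.choose (yval F x) 2 - 1) % yval F x)

/-- A position is long if `m(x) ≤ C(y_𝓗(x), 2)`. -/
noncomputable def IsLong {n : ℕ} (F : Set (Finset (Fin n))) (x : Fin n → ℕ) : Prop :=
  mval x ≤ Nat.choose (yval F x) 2

/-- The Jenkyns–Mayberry function `𝒰_𝓗`. -/
noncomputable def jmU {n : ℕ} (F : Set (Finset (Fin n))) (x : Fin n → ℕ) : ℕ :=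
  if mval x ≤ Nat.choose (yval F x) 2 then tetris F x else vval F x

/-- `𝓗` is a JM hypergraph if its SG function is given by the JM formula. -/
def IsJM {n : ℕ} (F : Set (Finset (Fin n))) : Prop :=
  ∀ x : Fin n → ℕ, grundy F x = jmU F x

/-- `T` is a transversal of `𝓗` if it meets every hyperedge. -/
def IsTransversal {n : ℕ} (F : Set (Finset (Fin n))) (T : Finset (Fin n)) : Prop :=
  ∀ H ∈ F, (T ∩ H).Nonempty

/-- `𝓗` is transversal-free if no hyperedge is a transversal. -/
def TransversalFree {n : ℕ} (F : Set (Finset (Fin n))) : Prop :=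
  ∀ H ∈ F, ¬ IsTransversal F H

/-- The induced subhypergraph `𝓗_S`. -/
def inducedH {n : ℕ} (F : Set (Finset (Fin n))) (S : Finset (Fin n)) : Set (Finset (Fin n)) :=
  {H | H ∈ F ∧ H ⊆ S}

/-- `𝓗` is minimal transversal-free. -/
def MinTransversalFree {n : ℕ} (F : Set (Finset (Fin n))) : Prop :=
  TransversalFree F ∧
    ∀ S : Finset (Fin n), S ⊂ Finset.univ → (inducedH F S).Nonempty →
      ¬ TransversalFree (inducedH F S)

/-- The symmetric hypergraph `𝓗(λ)` of a spectrum `λ₁ < ⋯ < λ_k` (1-indexed). -/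
def Hlambda {n : ℕ} (k : ℕ) (gl : ℕ → ℕ) : Set (Finset (Fin n)) :=
  {H | ∃ j, 1 ≤ j ∧ j ≤ k ∧ H.card = gl j}

section Infra

open Finset

variable {n : ℕ} {F : Set (Finset (Fin n))}

/-- Distribution lemma: values below caps with a prescribed sum. -/
lemma exists_fill (T : Finset (Fin n)) (cap : Fin n → ℕ) (τ : ℕ)
    (h : τ ≤ ∑ i ∈ T, cap i) :
    ∃ v : Fin n → ℕ, (∀ i, v i ≤ cap i) ∧ (∑ i ∈ T, v i = τ) := by
  induction T using Finset.induction generalizing τ with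
  | empty =>
      refine ⟨fun _ => 0, fun _ => Nat.zero_le _, ?_⟩
      simp only [Finset.sum_empty] at h ⊢
      omega
  | @insert a T ha ih =>
      rw [Finset.sum_insert ha] at h
      obtain ⟨v, hv1, hv2⟩ := ih (τ - cap a) (by omega)
      classical
      refine ⟨fun i => if i = a then min τ (cap a) else v i, ?_, ?_⟩
      · intro i; by_cases hi : i = a <;> simp [hi, hv1 i, min_le_right]
      · rw [Finset.sum_insert ha, if_pos rfl]
        have : ∑ i ∈ T, (if i = a then min τ (cap a) else v i) = ∑ i ∈ T, v i := by
          apply Finset.sum_congr rfl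
          intro i hi
          have : i ≠ a := by rintro rfl; exact ha hi
          simp [this]
        rw [this, hv2]
        omega

/-- Counting lemma: a set of values `≤ z` with sum `≥ r*z + r` has more than `r`
positive elements. -/
lemma count_pos_of_sum (U : Finset (Fin n)) (x : Fin n → ℕ) (z r : ℕ)
    (hle : ∀ i ∈ U, x i ≤ z) (hr : 1 ≤ r) (hsum : r * z + r ≤ ∑ i ∈ U, x i) :
    r + 1 ≤ (U.filter fun i => 0 < x i).card := by
  classical
  by_contra hcon
  push_neg at hcon
  have h1 : ∑ i ∈ U, x i = ∑ i ∈ U.filter (fun i => 0 < x i), x i := by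
    rw [← Finset.sum_filter_add_sum_filter_not U (fun i => 0 < x i) x]
    have : ∑ i ∈ U.filter (fun i => ¬ 0 < x i), x i = 0 := by
      apply Finset.sum_eq_zero; intro i hi
      simp only [Finset.mem_filter] at hi
      omega
    omega
  have h2 : ∑ i ∈ U.filter (fun i => 0 < x i), x i ≤ (U.filter fun i => 0 < x i).card * z := by
    apply Finset.sum_le_card_nsmul
    intro i hi
    exact hle i (Finset.mem_filter.mp hi).1
  have h3 : (U.filter fun i => 0 < x i).card * z ≤ r * z := by
    apply Nat.mul_le_mul_right
    omega
  omega

lemma tetrisReach_zero (x : Fin n → ℕ) : TetrisReach F x 0 :=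
  ⟨fun _ => ∅, fun j hj => absurd hj (Nat.not_lt_zero j), fun j hj => absurd hj (Nat.not_lt_zero j)⟩

lemma tetrisReach_mono_N {x : Fin n → ℕ} {N M : ℕ} (hMN : M ≤ N) (h : TetrisReach F x N) :
    TetrisReach F x M := by
  obtain ⟨f, h1, h2⟩ := h
  exact ⟨f, fun j hj => h1 j (lt_of_lt_of_le hj hMN), fun j hj => h2 j (lt_of_lt_of_le hj hMN)⟩

lemma tetrisReach_mono_x {x y : Fin n → ℕ} {N : ℕ} (hxy : ∀ i, x i ≤ y i)
    (h : TetrisReach F x N) : TetrisReach F y N := by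
  obtain ⟨f, h1, h2⟩ := h
  exact ⟨f, h1, fun j hj i => le_trans (h2 j hj i) (hxy i)⟩

/-- usage bound: in a reach of length `N`, each coordinate is used at most `min (x i) N` times. -/
lemma usage_le {x : Fin n → ℕ} {N : ℕ} {f : ℕ → Finset (Fin n)}
    (h2 : ∀ j < N, ∀ i, (∑ l ∈ Finset.range (j + 1), if i ∈ f l then 1 else 0) ≤ x i)
    (i : Fin n) : (∑ l ∈ Finset.range N, if i ∈ f l then 1 else 0) ≤ min (x i) N := by
  rcases Nat.eq_zero_or_pos N with hN | hN
  · subst hN; simp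
  refine le_min ?_ ?_
  · have := h2 (N - 1) (by omega) i
    have hNe : N - 1 + 1 = N := by omega
    rwa [hNe] at this
  · calc (∑ l ∈ Finset.range N, if i ∈ f l then 1 else 0)
        ≤ ∑ l ∈ Finset.range N, 1 := Finset.sum_le_sum (fun l _ => by split <;> omega)
      _ = N := by simp

/-- Transversal-type upper bound with usage caps. -/
lemma reach_count {a : ℕ} (hcard : ∀ H ∈ F, a ≤ H.card) {x : Fin n → ℕ} {N : ℕ}
    (h : TetrisReach F x N) (B : Finset (Fin n)) :
    N * (a - B.card) ≤ ∑ i ∈ Bᶜ, min (x i) N := by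
  classical
  obtain ⟨f, h1, h2⟩ := h
  have key : ∀ l < N, a - B.card ≤ ((f l) ∩ Bᶜ).card := by
    intro l hl
    have h3 : (f l).card ≤ ((f l) ∩ B).card + ((f l) ∩ Bᶜ).card := by
      rw [← Finset.card_union_of_disjoint]
      · apply Finset.card_le_card
        intro i hi
        simp only [Finset.mem_union, Finset.mem_inter, Finset.mem_compl]
        by_cases hiB : i ∈ B
        · exact Or.inl ⟨hi, hiB⟩
        · exact Or.inr ⟨hi, hiB⟩
      · exact Finset.disjoint_left.mpr (by
          intro i hi1 hi2
          simp only [Finset.mem_inter, Finset.mem_compl] at hi1 hi2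
          exact hi2.2 hi1.2)
    have h4 : ((f l) ∩ B).card ≤ B.card := Finset.card_le_card (Finset.inter_subset_right)
    have h5 := hcard (f l) (h1 l hl)
    omega
  calc N * (a - B.card) = ∑ _l ∈ Finset.range N, (a - B.card) := by simp [mul_comm]
    _ ≤ ∑ l ∈ Finset.range N, ((f l) ∩ Bᶜ).card := by
        apply Finset.sum_le_sum; intro l hl; exact key l (Finset.mem_range.mp hl)
    _ = ∑ l ∈ Finset.range N, ∑ i ∈ Bᶜ, (if i ∈ f l then 1 else 0) := by
        apply Finset.sum_congr rfl; intro l _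
        rw [Finset.card_eq_sum_ones]
        rw [Finset.sum_ite_mem]
        congr 1
        rw [Finset.inter_comm]
    _ = ∑ i ∈ Bᶜ, ∑ l ∈ Finset.range N, (if i ∈ f l then 1 else 0) := Finset.sum_comm
    _ ≤ ∑ i ∈ Bᶜ, min (x i) N := Finset.sum_le_sum (fun i _ => usage_le h2 i)

lemma reach_bdd (hcard : ∀ H ∈ F, 1 ≤ H.card) (x : Fin n → ℕ) {N : ℕ}
    (h : TetrisReach F x N) : N ≤ ∑ i, x i := by
  have := reach_count (a := 1) hcard h ∅
  simp only [Finset.card_empty, Nat.sub_zero, mul_one, Finset.compl_empty] at this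
  calc N ≤ ∑ i ∈ Finset.univ, min (x i) N := this
    _ ≤ ∑ i, x i := Finset.sum_le_sum (fun i _ => min_le_left _ _)

lemma tetris_bddAbove (hcard : ∀ H ∈ F, 1 ≤ H.card) (x : Fin n → ℕ) :
    BddAbove {N | TetrisReach F x N} :=
  ⟨∑ i, x i, fun _ h => reach_bdd hcard x h⟩

lemma le_tetris (hcard : ∀ H ∈ F, 1 ≤ H.card) {x : Fin n → ℕ} {N : ℕ}
    (h : TetrisReach F x N) : N ≤ tetris F x :=
  le_csSup (tetris_bddAbove hcard x) h

lemma tetris_le {x : Fin n → ℕ} {z : ℕ} (hub : ∀ N, TetrisReach F x N → N ≤ z) :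
    tetris F x ≤ z := by
  have h0 : (0:ℕ) ∈ {N | TetrisReach F x N} := tetrisReach_zero x
  exact csSup_le ⟨0, h0⟩ hub

lemma reach_tetris (hcard : ∀ H ∈ F, 1 ≤ H.card) (x : Fin n → ℕ) :
    TetrisReach F x (tetris F x) := by
  have h0 : (0:ℕ) ∈ {N | TetrisReach F x N} := tetrisReach_zero x
  exact Nat.sSup_mem ⟨0, h0⟩ (tetris_bddAbove hcard x)

lemma reach_of_le_tetris (hcard : ∀ H ∈ F, 1 ≤ H.card) {x : Fin n → ℕ} {N : ℕ}
    (h : N ≤ tetris F x) : TetrisReach F x N :=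
  tetrisReach_mono_N h (reach_tetris hcard x)

lemma tetris_mono (hcard : ∀ H ∈ F, 1 ≤ H.card) {x y : Fin n → ℕ} (hxy : ∀ i, x i ≤ y i) :
    tetris F x ≤ tetris F y :=
  le_tetris hcard (tetrisReach_mono_x hxy (reach_tetris hcard x))

end Infra
section Infra2

open Finset

variable {n : ℕ} {F : Set (Finset (Fin n))}

/-- The scheduling (achievability) lemma. -/
lemma sched (a : ℕ) (hedge : ∀ M : Finset (Fin n), M.card = a → M ∈ F)
    (B : Finset (Fin n)) (r : ℕ) (hr : 1 ≤ r) (hBr : B.card + r = a) :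
    ∀ (t : ℕ) (y : Fin n → ℕ), (∀ i ∈ B, t ≤ y i) → (∀ i ∈ Bᶜ, y i ≤ t) →
      (∑ i ∈ Bᶜ, y i = r * t) → TetrisReach F y t := by
  intro t
  induction t with
  | zero => intro y _ _ _; exact tetrisReach_zero y
  | succ t ih =>
    intro y hB hA hsum
    classical
    set Full := Bᶜ.filter (fun i => y i = t + 1) with hFull
    set Pos := Bᶜ.filter (fun i => 0 < y i) with hPos
    have hFP : Full ⊆ Pos := by
      intro i hi
      simp only [hFull, hPos, Finset.mem_filter] at hi ⊢
      exact ⟨hi.1, by omega⟩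
    have hsum_eq : ∑ i ∈ Pos, y i = r * (t+1) := by
      rw [← hsum]
      apply (Finset.sum_filter_of_ne ?_)
      intro i _ hyi
      omega
    have hFullcard : Full.card ≤ r := by
      have h1 : ∑ i ∈ Full, y i = Full.card * (t+1) := by
        rw [Finset.sum_congr rfl (fun i hi => (Finset.mem_filter.mp hi).2)]
        simp [mul_comm, hFull]
      have h2 : ∑ i ∈ Full, y i ≤ ∑ i ∈ Pos, y i :=
        Finset.sum_le_sum_of_subset hFP
      rw [h1, hsum_eq] at h2
      exact Nat.le_of_mul_le_mul_right h2 (by omega)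
    have hPoscard : r ≤ Pos.card := by
      have h2 : ∑ i ∈ Pos, y i ≤ Pos.card * (t+1) := by
        apply Finset.sum_le_card_nsmul
        intro i hi
        exact hA i (Finset.mem_filter.mp hi).1
      rw [hsum_eq] at h2
      exact Nat.le_of_mul_le_mul_right h2 (by omega)
    obtain ⟨S, hFS, hSP, hScard0⟩ :=
      Finset.exists_subsuperset_card_eq hFP (n := r - Full.card + Full.card) (by omega) (by omega)
    have hScard : S.card = r := by omega
    have hSBc : S ⊆ Bᶜ := hSP.trans (Finset.filter_subset _ _)
    set M := B ∪ S with hM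
    have hdisjBS : Disjoint B S := by
      rw [Finset.disjoint_left]
      intro i hiB hiS
      exact absurd hiB (Finset.mem_compl.mp (hSBc hiS))
    have hMcard : M.card = a := by
      rw [hM, Finset.card_union_of_disjoint hdisjBS, hScard, hBr]
    have hposM : ∀ i ∈ M, 1 ≤ y i := by
      intro i hi
      rcases Finset.mem_union.mp hi with hiB | hiS
      · have := hB i hiB; omega
      · exact (Finset.mem_filter.mp (hSP hiS)).2
    set y' := fun i => y i - (if i ∈ M then 1 else 0) with hy'
    have hy'eq : ∀ i, y' i + (if i ∈ M then 1 else 0) = y i := by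
      intro i
      by_cases hi : i ∈ M
      · have := hposM i hi
        simp only [hy', if_pos hi]
        omega
      · simp only [hy', if_neg hi]
        omega
    have hB' : ∀ i ∈ B, t ≤ y' i := by
      intro i hi
      have h1 := hB i hi
      have := hy'eq i
      by_cases hiM : i ∈ M <;> simp [hiM] at this <;> omega
    have hA' : ∀ i ∈ Bᶜ, y' i ≤ t := by
      intro i hi
      have h1 := hA i hi
      by_cases hfull : y i = t + 1
      · have hiF : i ∈ Full := Finset.mem_filter.mpr ⟨hi, hfull⟩
        have hiM : i ∈ M := Finset.mem_union.mpr (Or.inr (hFS hiF))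
        have := hy'eq i
        simp [hiM] at this
        omega
      · have := hy'eq i
        by_cases hiM : i ∈ M <;> simp [hiM] at this <;> omega
    have hsum' : ∑ i ∈ Bᶜ, y' i = r * t := by
      have h1 : ∑ i ∈ Bᶜ, (y' i + (if i ∈ M then 1 else 0)) = ∑ i ∈ Bᶜ, y i :=
        Finset.sum_congr rfl (fun i _ => hy'eq i)
      rw [Finset.sum_add_distrib] at h1
      have h2 : ∑ i ∈ Bᶜ, (if i ∈ M then 1 else 0) = r := by
        rw [Finset.sum_ite_mem]
        have : Bᶜ ∩ M = S := by
          rw [hM, Finset.inter_union_distrib_left]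
          have e1 : Bᶜ ∩ B = ∅ := by
            ext i; simp
          have e2 : Bᶜ ∩ S = S := by
            apply Finset.inter_eq_right.mpr hSBc
          rw [e1, e2, Finset.empty_union]
        rw [this, Finset.sum_const, smul_eq_mul, mul_one, hScard]
      rw [h2, hsum] at h1
      have : r * (t+1) = r * t + r := by ring
      omega
    obtain ⟨f, h1, h2⟩ := ih y' hB' hA' hsum'
    refine ⟨fun l => if l = 0 then M else f (l-1), ?_, ?_⟩
    · intro j hj
      by_cases hj0 : j = 0
      · simp only [hj0, if_pos rfl]
        exact hedge M hMcard
      · simp only [if_neg hj0]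
        exact h1 (j-1) (by omega)
    · intro j hj i
      have hsplit : (∑ l ∈ Finset.range (j+1),
            if i ∈ (if l = 0 then M else f (l-1)) then 1 else 0)
          = (∑ l ∈ Finset.range j, if i ∈ f l then 1 else 0)
            + (if i ∈ M then 1 else 0) := by
        rw [Finset.sum_range_succ']
        simp
      rw [hsplit]
      have hpart : (∑ l ∈ Finset.range j, if i ∈ f l then 1 else 0) ≤ y' i := by
        rcases Nat.eq_zero_or_pos j with hj0 | hj0
        · subst hj0; simp
        · have := h2 (j-1) (by omega) i
          have hje : j - 1 + 1 = j := by omega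
          rwa [hje] at this
      have := hy'eq i
      by_cases hiM : i ∈ M
      · rw [if_pos hiM] at this ⊢
        omega
      · rw [if_neg hiM] at this ⊢
        omega

/-- The two-sided certificate: pins down the tetris value exactly. -/
lemma tetris_eq_certificate (a : ℕ) (ha : 1 ≤ a)
    (hedge : ∀ M : Finset (Fin n), M.card = a → M ∈ F)
    (hcard : ∀ H ∈ F, a ≤ H.card)
    (B : Finset (Fin n)) (r z : ℕ) (hr : 1 ≤ r) (hBr : B.card + r = a)
    (x' : Fin n → ℕ) (hB : ∀ i ∈ B, z ≤ x' i) (hA : ∀ i ∈ Bᶜ, x' i ≤ z)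
    (hlo : r * z ≤ ∑ i ∈ Bᶜ, x' i) (hhi : ∑ i ∈ Bᶜ, x' i ≤ r * z + (r - 1)) :
    tetris F x' = z := by
  classical
  have hcard1 : ∀ H ∈ F, 1 ≤ H.card := fun H hH => le_trans ha (hcard H hH)
  have hub : tetris F x' ≤ z := by
    by_contra hcon
    push_neg at hcon
    have hreach : TetrisReach F x' (z+1) := reach_of_le_tetris hcard1 (by omega)
    have hcount := reach_count hcard hreach B
    have hBr' : a - B.card = r := by omega
    rw [hBr'] at hcount
    have h2 : ∑ i ∈ Bᶜ, min (x' i) (z+1) ≤ ∑ i ∈ Bᶜ, x' i :=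
      Finset.sum_le_sum (fun i _ => min_le_left _ _)
    have h3 : (z+1) * r = r * z + r := by ring
    omega
  obtain ⟨v, hv1, hv2⟩ := exists_fill Bᶜ x' (r * z) hlo
  set y := fun i => if i ∈ B then x' i else v i with hy
  have hyle : ∀ i, y i ≤ x' i := by
    intro i; simp only [hy]; split
    · exact le_refl _
    · exact hv1 i
  have hreach : TetrisReach F y z := by
    apply sched a hedge B r hr hBr z y
    · intro i hi; simp only [hy, if_pos hi]; exact hB i hi
    · intro i hi
      have hni : i ∉ B := Finset.mem_compl.mp hi
      simp only [hy, if_neg hni]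
      exact le_trans (hv1 i) (hA i hi)
    · rw [← hv2]
      apply Finset.sum_congr rfl
      intro i hi
      simp only [hy, if_neg (Finset.mem_compl.mp hi)]
  have hlow : z ≤ tetris F x' := le_tetris hcard1 (tetrisReach_mono_x hyle hreach)
  omega

end Infra2
section Infra3

open Finset

variable {n : ℕ} {F : Set (Finset (Fin n))}

/-- Assembly: a concrete move whose result satisfies the certificate. -/
lemma final_step (a : ℕ) (ha : 1 ≤ a)
    (hedge : ∀ M : Finset (Fin n), M.card = a → M ∈ F)
    (hcard : ∀ H ∈ F, a ≤ H.card)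
    (x x' : Fin n → ℕ) (z : ℕ) (B HB HA : Finset (Fin n)) (r : ℕ)
    (hHmem : HB ∪ HA ∈ F)
    (hHB : HB ⊆ B) (hHA : HA ⊆ Bᶜ)
    (hxB : ∀ i ∈ B, z < x i)
    (hd1 : ∀ i ∈ HB, x' i = x i - 1)
    (hd2 : ∀ i ∈ HA, x' i < x i ∧ x' i ≤ z)
    (hd3 : ∀ i, i ∉ HB → i ∉ HA → x' i = x i)
    (hout : ∀ i ∈ Bᶜ, i ∉ HA → x i ≤ z)
    (hr : 1 ≤ r) (hBr : B.card + r = a)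
    (hlo : r * z ≤ ∑ i ∈ Bᶜ, x' i) (hhi : ∑ i ∈ Bᶜ, x' i ≤ r * z + (r - 1)) :
    Move F x x' ∧ tetris F x' = z := by
  constructor
  · refine ⟨HB ∪ HA, hHmem, ?_, ?_⟩
    · intro i hi
      rcases Finset.mem_union.mp hi with hiB | hiA
      · have h1 := hd1 i hiB
        have h2 := hxB i (hHB hiB)
        omega
      · exact (hd2 i hiA).1
    · intro i hi
      rw [Finset.mem_union] at hi
      push_neg at hi
      exact hd3 i hi.1 hi.2
  · apply tetris_eq_certificate a ha hedge hcard B r z hr hBr x' ?_ ?_ hlo hhi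
    · intro i hi
      by_cases hiHB : i ∈ HB
      · have := hd1 i hiHB
        have := hxB i hi
        omega
      · have hiHA : i ∉ HA := by
          intro hc
          exact absurd hi (Finset.mem_compl.mp (hHA hc))
        have := hd3 i hiHB hiHA
        have := hxB i hi
        omega
    · intro i hi
      by_cases hiHA : i ∈ HA
      · exact (hd2 i hiHA).2
      · have hiHB : i ∉ HB := by
          intro hc
          exact absurd (hHB hc) (Finset.mem_compl.mp hi)
        rw [hd3 i hiHB hiHA]
        exact hout i hi hiHA

lemma sum_ite_split (C HA : Finset (Fin n)) (hsub : HA ⊆ C) (w x : Fin n → ℕ) :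
    ∑ i ∈ C, (if i ∈ HA then w i else x i) = (∑ i ∈ C \ HA, x i) + ∑ i ∈ HA, w i := by
  classical
  rw [← Finset.sum_sdiff hsub]
  congr 1
  · apply Finset.sum_congr rfl
    intro i hi
    rw [if_neg (Finset.mem_sdiff.mp hi).2]
  · apply Finset.sum_congr rfl
    intro i hi
    rw [if_pos hi]

lemma mval_le (x : Fin n → ℕ) (i : Fin n) : mval x ≤ x i := Nat.sInf_le ⟨i, rfl⟩

lemma mval_eq (x : Fin n → ℕ) (i₀ : Fin n) (h1 : ∀ i, x i₀ ≤ x i) : mval x = x i₀ := by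
  apply le_antisymm (mval_le x i₀)
  have hne : (Set.range x).Nonempty := ⟨x i₀, ⟨i₀, rfl⟩⟩
  apply le_csInf hne
  rintro _ ⟨i, rfl⟩
  exact h1 i

lemma long_of_zero (x' : Fin n → ℕ) (i₀ : Fin n) (h : x' i₀ = 0) : IsLong F x' := by
  unfold IsLong
  have h0 : mval x' = 0 := by
    have := mval_le x' i₀
    omega
  rw [h0]
  exact Nat.zero_le _

lemma long_transfer (hcard1 : ∀ H ∈ F, 1 ≤ H.card) (x x' : Fin n → ℕ) (m δ : ℕ) (i_m : Fin n)
    (hm : mval x = m) (hδ1 : 1 ≤ δ)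
    (him : x' i_m = m - δ) (hlow : ∀ i, m - δ ≤ x' i)
    (hdom : ∀ i, x i - m ≤ x' i - (m - δ))
    (hlong : IsLong F x) : IsLong F x' := by
  have hm' : mval x' = m - δ := by
    rw [← him]
    apply mval_eq
    intro i
    rw [him]
    exact hlow i
  unfold IsLong yval at hlong ⊢
  rw [hm', hm] at *
  have hmono : tetris F (fun i => x i - m) ≤ tetris F (fun i => x' i - (m - δ)) :=
    tetris_mono hcard1 hdom
  have hch : Nat.choose (tetris F (fun i => x i - m) + 1) 2 ≤
      Nat.choose (tetris F (fun i => x' i - (m - δ)) + 1) 2 :=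
    Nat.choose_le_choose 2 (by omega)
  omega

end Infra3

section Glam

open Finset

variable {k : ℕ} {gl : ℕ → ℕ}

lemma gl_ge (hmono : ∀ i, 1 ≤ i → i < k → gl i < gl (i+1)) :
    ∀ j, 1 ≤ j → j ≤ k → gl 1 ≤ gl j := by
  intro j
  induction j with
  | zero => omega
  | succ jj ih =>
    intro _ h2
    by_cases hjj : jj = 0
    · subst hjj; exact le_refl _
    · have h3 : gl 1 ≤ gl jj := ih (by omega) (by omega)
      have h4 := hmono jj (by omega) (by omega)
      omega

lemma gl_density (hk : 1 ≤ k) (hpos : 1 < gl 1)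
    (hmono : ∀ i, 1 ≤ i → i < k → gl i < gl (i+1))
    (hgap : ∀ i, 1 ≤ i → i < k → gl (i + 1) - gl i ≤ gl 1) :
    ∀ s, gl 1 ≤ s → s ≤ gl k →
      ∃ j, 1 ≤ j ∧ j ≤ k ∧ s ≤ gl j ∧ gl j ≤ s + gl 1 - 1 := by
  intro s hs1 hs2
  have key : ∀ j, 1 ≤ j → j ≤ k → s ≤ gl j →
      ∃ j', 1 ≤ j' ∧ j' ≤ k ∧ s ≤ gl j' ∧ gl j' ≤ s + gl 1 - 1 := by
    intro j
    induction j with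
    | zero => omega
    | succ jj ih =>
      intro h1 h2 h3
      by_cases hjj : jj = 0
      · subst hjj
        exact ⟨1, le_refl _, hk, h3, by omega⟩
      · have hjj1 : 1 ≤ jj := by omega
        by_cases hsle : s ≤ gl jj
        · exact ih hjj1 (by omega) hsle
        · push_neg at hsle
          refine ⟨jj+1, by omega, h2, h3, ?_⟩
          have hg := hgap jj hjj1 (by omega)
          have hm := hmono jj hjj1 (by omega)
          omega
  exact key k hk (le_refl k) hs2

end Glam
section Infra4

open Finset

variable {n : ℕ} {F : Set (Finset (Fin n))}

/-- Common assembly step for all branches. -/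
lemma branch_finish (a : ℕ) (ha : 1 ≤ a)
    (hedge : ∀ M : Finset (Fin n), M.card = a → M ∈ F)
    (hcard : ∀ H ∈ F, a ≤ H.card)
    (x : Fin n → ℕ) (z : ℕ) (B HA : Finset (Fin n)) (r lam pad : ℕ)
    (hlamF : ∀ M : Finset (Fin n), M.card = lam → M ∈ F)
    (hHA : HA ⊆ Bᶜ)
    (hpadcard : pad + HA.card = lam) (hpadle : pad ≤ B.card)
    (w : Fin n → ℕ)
    (hw1 : ∀ i ∈ HA, w i < x i) (hw2 : ∀ i ∈ HA, w i ≤ z)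
    (hxB : ∀ i ∈ B, z < x i)
    (hout : ∀ i ∈ Bᶜ, i ∉ HA → x i ≤ z)
    (hr : 1 ≤ r) (hBr : B.card + r = a)
    (hsum_lo : r * z ≤ (∑ i ∈ Bᶜ \ HA, x i) + ∑ i ∈ HA, w i)
    (hsum_hi : (∑ i ∈ Bᶜ \ HA, x i) + ∑ i ∈ HA, w i ≤ r * z + (r - 1)) :
    ∃ x' : Fin n → ℕ, Move F x x' ∧ tetris F x' = z ∧
      (∀ i ∈ HA, x' i = w i) ∧
      (∀ i, i ∉ HA → x' i = x i ∨ (i ∈ B ∧ x' i = x i - 1)) := by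
  classical
  obtain ⟨HB, hHBsub, hHBcard⟩ := Finset.exists_subset_card_eq (s := B) (n := pad) hpadle
  set x' := fun i => if i ∈ HB then x i - 1 else if i ∈ HA then w i else x i with hx'
  have hdisj : ∀ i ∈ HA, i ∉ HB := by
    intro i hi hiB
    exact absurd (hHBsub hiB) (Finset.mem_compl.mp (hHA hi))
  have hHAeq : ∀ i ∈ HA, x' i = w i := by
    intro i hi
    simp only [hx', if_neg (hdisj i hi), if_pos hi]
  have hHBeq : ∀ i ∈ HB, x' i = x i - 1 := by
    intro i hi
    simp only [hx', if_pos hi]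
  have hothereq : ∀ i, i ∉ HB → i ∉ HA → x' i = x i := by
    intro i h1 h2
    simp only [hx', if_neg h1, if_neg h2]
  have hHcard : (HB ∪ HA).card = lam := by
    rw [Finset.card_union_of_disjoint, hHBcard, hpadcard]
    rw [Finset.disjoint_left]
    intro i hi
    exact fun hi2 => hdisj i hi2 hi
  have hsum_eq : ∑ i ∈ Bᶜ, x' i = (∑ i ∈ Bᶜ \ HA, x i) + ∑ i ∈ HA, w i := by
    have h1 : ∑ i ∈ Bᶜ, x' i = ∑ i ∈ Bᶜ, (if i ∈ HA then w i else x i) := by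
      apply Finset.sum_congr rfl
      intro i hi
      have hniHB : i ∉ HB := by
        intro hc
        exact absurd (hHBsub hc) (Finset.mem_compl.mp hi)
      simp only [hx', if_neg hniHB]
    rw [h1, sum_ite_split Bᶜ HA hHA]
  obtain ⟨hmove, htet⟩ := final_step a ha hedge hcard x x' z B HB HA r
    (hlamF _ hHcard) hHBsub hHA hxB hHBeq
    (fun i hi => ⟨hHAeq i hi ▸ hw1 i hi, hHAeq i hi ▸ hw2 i hi⟩)
    hothereq hout hr hBr (by rw [hsum_eq]; exact hsum_lo) (by rw [hsum_eq]; exact hsum_hi)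
  refine ⟨x', hmove, htet, hHAeq, ?_⟩
  intro i hiA
  by_cases hiB : i ∈ HB
  · exact Or.inr ⟨hHBsub hiB, hHBeq i hiB⟩
  · exact Or.inl (hothereq i hiB hiA)

/-- fill with a designated zero coordinate. -/
lemma exists_w_zero (HA : Finset (Fin n)) (istar : Fin n) (hstar : istar ∈ HA)
    (cap : Fin n → ℕ) (τ : ℕ)
    (hfeas : τ ≤ ∑ i ∈ HA \ {istar}, cap i) :
    ∃ w : Fin n → ℕ, w istar = 0 ∧ (∀ i, w i ≤ cap i) ∧ ∑ i ∈ HA, w i = τ := by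
  classical
  obtain ⟨v, hv1, hv2⟩ := exists_fill (HA \ {istar}) cap τ hfeas
  refine ⟨fun i => if i = istar then 0 else v i, by simp, ?_, ?_⟩
  · intro i
    by_cases hi : i = istar
    · simp [hi]
    · simp only [if_neg hi]
      exact hv1 i
  · have hins : HA = insert istar (HA \ {istar}) := by
      rw [Finset.insert_eq]
      ext i
      simp only [Finset.mem_union, Finset.mem_singleton, Finset.mem_sdiff]
      constructor
      · intro hi
        by_cases h : i = istar
        · exact Or.inl h
        · exact Or.inr ⟨hi, h⟩
      · rintro (rfl | ⟨hi, _⟩)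
        · exact hstar
        · exact hi
    rw [hins, Finset.sum_insert (by simp), if_pos rfl]
    rw [← hv2]
    have hcongr : ∑ i ∈ HA \ {istar}, (if i = istar then 0 else v i) = ∑ i ∈ HA \ {istar}, v i := by
      apply Finset.sum_congr rfl
      intro i hi
      have hine : i ≠ istar := fun h => (Finset.mem_sdiff.mp hi).2 (Finset.mem_singleton.mpr h)
      simp [hine]
    omega

end Infra4

set_option maxHeartbeats 2000000 in
/-- Lemma (B1 for minimal transversal-free symmetric hypergraphs with `λ₁ > 1`). -/
theorem Hlambda_condition_B1
    (n k : ℕ) (gl : ℕ → ℕ) (hk : 1 ≤ k) (hpos : 1 < gl 1)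
    (hmono : ∀ i, 1 ≤ i → i < k → gl i < gl (i + 1)) (hle : gl k ≤ n)
    (hgap : ∀ i, 1 ≤ i → i < k → gl (i + 1) - gl i ≤ gl 1)
    (hsum : gl 1 + gl k = n)
    (x : Fin n → ℕ) (hlong : IsLong (Hlambda (n := n) k gl) x)
    (z : ℕ) (hz1 : mval x ≤ z) (hz2 : z < tetris (Hlambda (n := n) k gl) x) :
    ∃ x', Move (Hlambda (n := n) k gl) x x' ∧ IsLong (Hlambda (n := n) k gl) x' ∧
      tetris (Hlambda (n := n) k gl) x' = z := by
  classical
  set F := Hlambda (n := n) k gl with hF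
  set a := gl 1 with ha_def
  set b := gl k with hb_def
  have ha2 : 2 ≤ a := hpos
  have hab : a ≤ b := gl_ge hmono k hk (le_refl k)
  have hn : n = a + b := hsum.symm
  have hedge : ∀ M : Finset (Fin n), M.card = a → M ∈ F :=
    fun M hM => ⟨1, le_refl 1, hk, hM⟩
  have hedgeb : ∀ M : Finset (Fin n), M.card = b → M ∈ F :=
    fun M hM => ⟨k, hk, le_refl k, hM⟩
  have hcard : ∀ H ∈ F, a ≤ H.card := by
    rintro H ⟨j, h1, h2, hc⟩
    rw [hc]
    exact gl_ge hmono j h1 h2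
  have hcard1 : ∀ H ∈ F, 1 ≤ H.card := fun H hH => le_trans (by omega) (hcard H hH)
  have hdensity := gl_density hk hpos hmono hgap
  have hnpos : 0 < n := by omega
  haveI : Nonempty (Fin n) := ⟨⟨0, hnpos⟩⟩
  set m := mval x with hm_def
  obtain ⟨i_m, him⟩ : ∃ i, x i = m := by
    have : m ∈ Set.range x := Nat.sInf_mem (Set.range_nonempty x)
    obtain ⟨i, hi⟩ := this
    exact ⟨i, hi⟩
  have hmle : ∀ i, m ≤ x i := mval_le x
  have hzm : m ≤ z := hz1
  have hreach : TetrisReach F x (z+1) := reach_of_le_tetris hcard1 (by omega)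
  -- the large coordinates
  set G := Finset.univ.filter (fun i => z < x i) with hG_def
  set c := G.card with hc_def
  set β := min c (a-1) with hβ_def
  set r := a - β with hr_def
  have hr1 : 1 ≤ r := by omega
  have hβr : β + r = a := by omega
  obtain ⟨B, hBsubG, hBcard⟩ := Finset.exists_subset_card_eq (s := G) (n := β) (by omega)
  have hxB : ∀ i ∈ B, z < x i := fun i hi => (Finset.mem_filter.mp (hBsubG hi)).2
  have himG : i_m ∉ G := by
    simp only [hG_def, Finset.mem_filter]
    push_neg
    intro
    omega
  have himB : i_m ∉ B := fun hc => himG (hBsubG hc)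
  have hcn : c + 1 ≤ n := by
    have hsub : G ⊆ Finset.univ.erase i_m := by
      intro i hi
      apply Finset.mem_erase.mpr
      refine ⟨?_, Finset.mem_univ i⟩
      rintro rfl
      exact himG hi
    have := Finset.card_le_card hsub
    rw [Finset.card_erase_of_mem (Finset.mem_univ i_m), Finset.card_univ, Fintype.card_fin] at this
    omega
  set D0 := G \ B with hD0_def
  set d := D0.card with hd_def
  have hdc : d + β = c := by
    rw [hd_def, Finset.card_sdiff_of_subset hBsubG, hBcard]
    have := Finset.card_le_card hBsubG
    omega
  set A0 := Finset.univ.filter (fun i => x i ≤ z) with hA0_def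
  have hA0mem : ∀ i, i ∈ A0 ↔ x i ≤ z := by
    intro i
    simp [hA0_def]
  have hD0mem : ∀ i, i ∈ D0 ↔ (z < x i ∧ i ∉ B) := by
    intro i
    simp only [hD0_def, Finset.mem_sdiff, hG_def, Finset.mem_filter, Finset.mem_univ, true_and]
  have hD0sub : D0 ⊆ Bᶜ := by
    intro i hi
    exact Finset.mem_compl.mpr ((hD0mem i).mp hi).2
  have hBG : ∀ i ∈ B, i ∉ A0 := by
    intro i hi hiA
    have := hxB i hi
    have := (hA0mem i).mp hiA
    omega
  have hA0sub : A0 ⊆ Bᶜ := fun i hi => Finset.mem_compl.mpr (fun hB => hBG i hB hi)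
  have hsplitBc : Bᶜ \ D0 = A0 := by
    ext i
    simp only [Finset.mem_sdiff, Finset.mem_compl, hD0mem i, hA0mem i]
    constructor
    · rintro ⟨h1, h2⟩
      push_neg at h2
      by_contra hcon
      push_neg at hcon
      exact absurd (h2 hcon) (by tauto)
    · intro h
      constructor
      · intro hB
        have := hxB i hB
        omega
      · push_neg
        intro h2
        omega
  have himA0 : i_m ∈ A0 := (hA0mem i_m).mpr (by omega)
  set S := ∑ i ∈ A0, x i with hS_def
  have hBccard : Bᶜ.card = b + r := by
    rw [Finset.card_compl, hBcard, Fintype.card_fin]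
    omega
  have hA0card : A0.card + d = b + r := by
    have h1 : (Bᶜ \ D0).card = Bᶜ.card - d := by
      rw [Finset.card_sdiff_of_subset hD0sub]
    rw [hsplitBc, hBccard] at h1
    have h2 : d ≤ Bᶜ.card := by
      rw [← hd_def] at *
      exact hBccard ▸ (Finset.card_le_card hD0sub)
    rw [hBccard] at h2
    omega
  have hdb : d ≤ b := by omega
  have hK : r * (z+1) ≤ S + d * (z+1) := by
    have hcount := reach_count hcard hreach B
    rw [hBcard] at hcount
    have hBr' : a - β = r := by omega
    rw [hBr'] at hcount
    have hsplit : ∑ i ∈ Bᶜ, min (x i) (z+1) = S + d * (z+1) := by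
      rw [← Finset.sum_sdiff hD0sub, hsplitBc]
      congr 1
      · apply Finset.sum_congr rfl
        intro i hi
        have := (hA0mem i).mp hi
        omega
      · rw [Finset.sum_congr rfl (fun i hi => show min (x i) (z+1) = z+1 by
          have := ((hD0mem i).mp hi).1
          omega)]
        simp [mul_comm, hd_def]
    rw [hsplit] at hcount
    calc r * (z+1) = (z+1) * r := by ring
      _ ≤ S + d * (z+1) := hcount
  have hpick : ∀ h : ℕ, 1 ≤ h → h ≤ b →
      ∃ lam, (∀ M : Finset (Fin n), M.card = lam → M ∈ F) ∧ h ≤ lam ∧ lam ≤ h + (a-1) ∧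
        (h ≤ a → lam = a) := by
    intro h h1 hb'
    by_cases hha : h ≤ a
    · exact ⟨a, hedge, hha, by omega, fun _ => rfl⟩
    · obtain ⟨j, hj1, hj2, hs1, hs2⟩ := hdensity h (by omega) hb'
      exact ⟨gl j, fun M hM => ⟨j, hj1, hj2, hM⟩, hs1, by omega, fun hc => absurd hc hha⟩
  have hWz : r * z + r - 1 = r * z + (r - 1) := by omega
  by_cases hm0 : m = 0
  · -- Branch M0 : m = 0
    have hxm0 : x i_m = 0 := by omega
    set P1 := A0.filter (fun i => 0 < x i) with hP1_def
    set p := P1.card with hp_def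
    have hP1mem : ∀ i, i ∈ P1 ↔ (x i ≤ z ∧ 0 < x i) := by
      intro i
      rw [hP1_def, Finset.mem_filter, hA0mem]
    have hP1sub : P1 ⊆ A0 := Finset.filter_subset _ _
    have hSP1 : ∑ i ∈ A0 \ P1, x i = 0 := by
      apply Finset.sum_eq_zero
      intro i hi
      obtain ⟨h1, h2⟩ := Finset.mem_sdiff.mp hi
      rw [hP1_def, Finset.mem_filter] at h2
      push_neg at h2
      have := h2 h1
      omega
    have hSsplit : ∑ i ∈ P1, x i = S := by
      have := Finset.sum_sdiff (f := x) hP1sub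
      omega
    have hSpz : S ≤ p * z := by
      rw [← hSsplit, hp_def]
      apply Finset.sum_le_card_nsmul
      intro i hi
      exact ((hP1mem i).mp hi).1
    have hKlin : r*z + r ≤ S + d*z + d := by
      have e1 : d*(z+1) = d*z+d := by ring
      have e2 : r*(z+1) = r*z+r := by ring
      omega
    have hrpd : r ≤ p + d := by
      have e3 : (p+d)*(z+1) = p*z + p + (d*z+d) := by ring
      have e1 : d*(z+1) = d*z+d := by ring
      have hKK : r * (z+1) ≤ (p+d) * (z+1) := by omega
      exact Nat.le_of_mul_le_mul_right hKK (by omega)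
    have hrd1 : 1 ≤ d → r = 1 := by omega
    have hSdz : r*z ≤ S + d*z := by
      rcases Nat.eq_zero_or_pos d with h0 | h0
      · have hz0 : d * z = 0 := by rw [h0, Nat.zero_mul]
        omega
      · have hr1' : r = 1 := hrd1 h0
        have h1z : 1 * z ≤ d * z := Nat.mul_le_mul_right z h0
        rw [hr1']
        omega
    have hPred : ∃ t : ℕ, ∃ T : Finset (Fin n),
        T ⊆ P1 ∧ T.card = t ∧ ∑ i ∈ A0 \ T, x i ≤ r*z + (r-1) :=
      ⟨p, P1, Finset.Subset.refl _, rfl, by rw [hSP1]; omega⟩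
    set th := Nat.find hPred with hth_def
    obtain ⟨T, hTsub, hTcard, hTrem⟩ := Nat.find_spec hPred
    rw [← hth_def] at hTcard
    have hthp : th ≤ p :=
      Nat.find_min' hPred ⟨P1, Finset.Subset.refl _, rfl, by rw [hSP1]; omega⟩
    -- th ≤ tstar : the fill capacity bound
    have hthstar : th + r * z ≤ S + d * z := by
      by_cases hcmp : S + d*z - r*z ≤ p
      · -- witness of size S + d*z - r*z
        obtain ⟨T2, hT2sub, hT2card⟩ :=
          Finset.exists_subset_card_eq (s := P1) (n := (S + d*z - r*z)) (by omega)
        have hT2ge : T2.card ≤ ∑ i ∈ T2, x i := by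
          rw [Finset.card_eq_sum_ones]
          apply Finset.sum_le_sum
          intro i hi
          exact ((hP1mem i).mp (hT2sub hi)).2
        have hT2split : ∑ i ∈ A0 \ T2, x i + ∑ i ∈ T2, x i = S :=
          Finset.sum_sdiff (hT2sub.trans hP1sub)
        have hwit : ∑ i ∈ A0 \ T2, x i ≤ r*z + (r-1) := by omega
        have := Nat.find_min' hPred ⟨T2, hT2sub, hT2card, hwit⟩
        omega
      · -- th ≤ p < S + d*z - r*z
        omega
    have hpos_facts : 1 ≤ th → (th + r ≤ p ∧ th - 1 + (r*z + r) ≤ S) := by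
      intro hth1
      have hTne : T.Nonempty := Finset.card_pos.mp (by omega)
      obtain ⟨t0, ht0⟩ := hTne
      have hT'sub : T.erase t0 ⊆ P1 := (Finset.erase_subset _ _).trans hTsub
      have hT'card : (T.erase t0).card = th - 1 := by
        rw [Finset.card_erase_of_mem ht0, hTcard]
      have hnot := Nat.find_min hPred (m := th - 1) (by omega)
      push_neg at hnot
      have hbig := hnot (T.erase t0) hT'sub hT'card
      have hzle : ∀ i ∈ A0 \ T.erase t0, x i ≤ z :=
        fun i hi => (hA0mem i).mp (Finset.mem_sdiff.mp hi).1
      have hcount := count_pos_of_sum (A0 \ T.erase t0) x z r hzle (by omega) (by omega)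
      have hsubflt : (A0 \ T.erase t0).filter (fun i => 0 < x i) ⊆ P1 \ T.erase t0 := by
        intro i hi
        obtain ⟨hi1, hi2⟩ := Finset.mem_filter.mp hi
        obtain ⟨hi3, hi4⟩ := Finset.mem_sdiff.mp hi1
        exact Finset.mem_sdiff.mpr ⟨(hP1mem i).mpr ⟨(hA0mem i).mp hi3, hi2⟩, hi4⟩
      have hc1 : (P1 \ T.erase t0).card + (th - 1) = p := by
        rw [Finset.card_sdiff_of_subset hT'sub, hT'card]
        have := Finset.card_le_card hT'sub
        omega
      have hc2 := Finset.card_le_card hsubflt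
      have hsplit2 : ∑ i ∈ A0 \ T.erase t0, x i + ∑ i ∈ T.erase t0, x i = S :=
        Finset.sum_sdiff ((Finset.erase_subset _ _).trans (hTsub.trans hP1sub))
      have hT'ge : (th - 1) ≤ ∑ i ∈ T.erase t0, x i := by
        rw [← hT'card, Finset.card_eq_sum_ones]
        apply Finset.sum_le_sum
        intro i hi
        exact ((hP1mem i).mp (hT'sub hi)).2
      constructor
      · omega
      · omega
    set h1 := max (d + th) r with hh1_def
    have hpA0 : p ≤ A0.card := by
      rw [hp_def]
      exact Finset.card_le_card hP1sub
    have hh1b : h1 ≤ b := by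
      rcases Nat.eq_zero_or_pos th with h0 | h0
      · omega
      · have := hpos_facts h0
        omega
    obtain ⟨lam, hlamF', hlam1, hlam2, hlam3⟩ := hpick h1 (by omega) hh1b
    set h := max (lam - β) h1 with hh_def
    have hlamh : lam ≤ h + β := by omega
    have hΔh : h + r*z ≤ S + d*z + d := by
      rcases Nat.eq_zero_or_pos d with hd' | hd'
      · have hz0 : d * z = 0 := by rw [hd', Nat.zero_mul]
        rcases Nat.eq_zero_or_pos th with h0 | h0
        · have hla : lam = a := hlam3 (by omega)
          omega
        · have hSbig := (hpos_facts h0).2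
          by_cases hS1 : h1 ≤ a
          · have hla : lam = a := hlam3 hS1
            omega
          · omega
      · have hβ' : β = a - 1 := by omega
        have h1z : 1 * z ≤ d * z := Nat.mul_le_mul_right z hd'
        have hr1' : r = 1 := by omega
        rcases Nat.eq_zero_or_pos th with h0 | h0
        · omega
        · have hSbig := (hpos_facts h0).2
          omega
    have hhd : h ≤ d + p := by
      rcases Nat.eq_zero_or_pos th with h0 | h0
      · by_cases hS1 : h1 ≤ a
        · have hla : lam = a := hlam3 hS1
          omega
        · have hd' : 1 ≤ d := by omega
          have hr1' : r = 1 := hrd1 hd'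
          have hβ' : β = a - 1 := by omega
          omega
      · have := (hpos_facts h0).1
        omega
    -- extend T to T' of size h - d
    obtain ⟨T', hTT', hT'P1, hT'card0⟩ :=
      Finset.exists_subsuperset_card_eq hTsub (n := h - d - th + T.card) (by omega) (by omega)
    have hT'card : T'.card = h - d := by omega
    have hS0le : ∑ i ∈ A0 \ T', x i ≤ r*z + (r-1) := by
      apply le_trans (Finset.sum_le_sum_of_subset ?_) hTrem
      exact Finset.sdiff_subset_sdiff (Finset.Subset.refl _) hTT'
    set HA := D0 ∪ T' with hHA_def
    have hTD0 : Disjoint D0 T' := by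
      rw [Finset.disjoint_left]
      intro i hi1 hi2
      have := ((hD0mem i).mp hi1).1
      have := ((hP1mem i).mp (hT'P1 hi2)).1
      omega
    have hHAcard : HA.card = h := by
      rw [hHA_def, Finset.card_union_of_disjoint hTD0, hT'card]
      omega
    have hHAsub : HA ⊆ Bᶜ := by
      rw [hHA_def]
      intro i hi
      rcases Finset.mem_union.mp hi with h3 | h3
      · exact hD0sub h3
      · exact hA0sub (hP1sub (hT'P1 h3))
    have hBcHA : Bᶜ \ HA = A0 \ T' := by
      ext i
      simp only [Finset.mem_sdiff, Finset.mem_compl, hHA_def, Finset.mem_union, hA0mem i]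
      constructor
      · rintro ⟨h1', h2⟩
        push_neg at h2
        obtain ⟨h3, h4⟩ := h2
        refine ⟨?_, h4⟩
        by_contra hcon
        push_neg at hcon
        exact h3 ((hD0mem i).mpr ⟨hcon, h1'⟩)
      · rintro ⟨h1', h3⟩
        have hiB : i ∉ B := by
          intro hc
          have := hxB i hc
          omega
        refine ⟨hiB, ?_⟩
        push_neg
        refine ⟨?_, h3⟩
        intro hc
        have := ((hD0mem i).mp hc).1
        omega
    set S0 := ∑ i ∈ Bᶜ \ HA, x i with hS0_def
    have hS0W : S0 ≤ r*z + (r-1) := by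
      rw [hS0_def, hBcHA]
      exact hS0le
    have hsumT' : ∑ i ∈ T', (x i - 1) + (h - d) = ∑ i ∈ T', x i := by
      rw [← hT'card, Finset.card_eq_sum_ones, ← Finset.sum_add_distrib]
      apply Finset.sum_congr rfl
      intro i hi
      have := ((hP1mem i).mp (hT'P1 hi)).2
      omega
    have hS0T' : S0 + ∑ i ∈ T', x i = S := by
      rw [hS0_def, hBcHA]
      exact Finset.sum_sdiff (hT'P1.trans hP1sub)
    set cap := fun i => if i ∈ D0 then z else x i - 1 with hcap_def
    have hcapsum : ∑ i ∈ HA, cap i = d * z + ∑ i ∈ T', (x i - 1) := by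
      rw [hHA_def, Finset.sum_union hTD0]
      congr 1
      · rw [Finset.sum_congr rfl (fun i hi => show cap i = z by
          simp only [hcap_def, if_pos hi])]
        simp [mul_comm, hd_def]
      · apply Finset.sum_congr rfl
        intro i hi
        have : i ∉ D0 := Finset.disjoint_right.mp hTD0 hi
        simp only [hcap_def, if_neg this]
    have hτfeas : max (r*z) S0 - S0 ≤ ∑ i ∈ HA, cap i := by
      rw [hcapsum]
      omega
    obtain ⟨v, hvle, hvsum⟩ := exists_fill HA cap (max (r*z) S0 - S0) hτfeas
    have hwx : ∀ i ∈ HA, v i < x i := by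
      intro i hi
      have hle := hvle i
      by_cases hiD : i ∈ D0
      · have := ((hD0mem i).mp hiD).1
        simp only [hcap_def, if_pos hiD] at hle
        omega
      · simp only [hcap_def, if_neg hiD] at hle
        have hiT : i ∈ T' := by
          rw [hHA_def] at hi
          rcases Finset.mem_union.mp hi with h3 | h3
          · exact absurd h3 hiD
          · exact h3
        have := ((hP1mem i).mp (hT'P1 hiT)).2
        omega
    have hwz : ∀ i ∈ HA, v i ≤ z := by
      intro i hi
      have hle := hvle i
      by_cases hiD : i ∈ D0
      · simp only [hcap_def, if_pos hiD] at hle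
        omega
      · simp only [hcap_def, if_neg hiD] at hle
        have hiT : i ∈ T' := by
          rw [hHA_def] at hi
          rcases Finset.mem_union.mp hi with h3 | h3
          · exact absurd h3 hiD
          · exact h3
        have := ((hP1mem i).mp (hT'P1 hiT)).1
        omega
    obtain ⟨x', hmove, htet, hHAeq, hrest⟩ :=
      branch_finish a (by omega) hedge hcard x z B HA r lam (lam - h) hlamF' hHAsub
        (by rw [hHAcard]; omega)
        (by rw [hBcard]; omega)
        v hwx hwz hxB
        (fun i hi hni => (hA0mem i).mp (hsplitBc ▸ Finset.mem_sdiff.mpr ⟨hi, fun hD =>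
          hni (by rw [hHA_def]; exact Finset.mem_union_left _ hD)⟩))
        hr1 (by omega)
        (by rw [← hS0_def, hvsum]; omega)
        (by rw [← hS0_def, hvsum]; omega)
    have himHA : i_m ∉ HA := by
      rw [hHA_def]
      intro hc
      rcases Finset.mem_union.mp hc with h3 | h3
      · have := ((hD0mem i_m).mp h3).1
        omega
      · have := ((hP1mem i_m).mp (hT'P1 h3)).2
        omega
    have hx'im : x' i_m = 0 := by
      rcases hrest i_m himHA with h3 | ⟨h3, _⟩
      · omega
      · exact absurd h3 himB
    exact ⟨x', hmove, long_of_zero x' i_m hx'im, htet⟩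
  · have hm1 : 1 ≤ m := by omega
    have hz1' : 1 ≤ z := by omega
    by_cases hd0 : d = 0
    · -- Branch M1a : m ≥ 1, d = 0
      have hD0empty : D0 = ∅ := Finset.card_eq_zero.mp (by omega)
      have hBcA0 : Bᶜ = A0 := by
        rw [← hsplitBc, hD0empty, Finset.sdiff_empty]
      have hKlin : r*z + r ≤ S := by
        have e1 : d*(z+1) = d*z+d := by ring
        have e2 : r*(z+1) = r*z+r := by ring
        have hz0 : d * z = 0 := by rw [show d = 0 from hd0, Nat.zero_mul]
        omega
      set A1 := A0.erase i_m with hA1_def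
      have hA1sub : A1 ⊆ A0 := Finset.erase_subset _ _
      have hA1card : A1.card + 1 = b + r := by
        rw [hA1_def, Finset.card_erase_of_mem himA0]
        have hA0pos : 1 ≤ A0.card := Finset.card_pos.mpr ⟨i_m, himA0⟩
        omega
      have hA1mem : ∀ i, i ∈ A1 ↔ (x i ≤ z ∧ i ≠ i_m) := by
        intro i
        rw [hA1_def, Finset.mem_erase, hA0mem]
        tauto
      have hSA1 : m + ∑ i ∈ A1, x i = S := by
        rw [hS_def, hA1_def, ← him]
        exact Finset.add_sum_erase A0 x himA0
      have hPred : ∃ t : ℕ, ∃ T : Finset (Fin n),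
          T ⊆ A1 ∧ T.card = t ∧ ∑ i ∈ A1 \ T, x i ≤ r*z + (r-1) :=
        ⟨A1.card, A1, Finset.Subset.refl _, rfl, by simp⟩
      set th := Nat.find hPred with hth_def
      obtain ⟨T, hTsub, hTcard, hTrem⟩ := Nat.find_spec hPred
      rw [← hth_def] at hTcard
      have hthA1 : th ≤ A1.card := hTcard ▸ Finset.card_le_card hTsub
      have hthb : th + 1 ≤ b := by
        rcases Nat.eq_zero_or_pos th with h0 | h0
        · omega
        · have hTne : T.Nonempty := Finset.card_pos.mp (by omega)
          obtain ⟨t0, ht0⟩ := hTne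
          have hT'sub : T.erase t0 ⊆ A1 := (Finset.erase_subset _ _).trans hTsub
          have hT'card : (T.erase t0).card = th - 1 := by
            rw [Finset.card_erase_of_mem ht0, hTcard]
          have hnot := Nat.find_min hPred (m := th - 1) (by omega)
          push_neg at hnot
          have hbig := hnot (T.erase t0) hT'sub hT'card
          have hzle : ∀ i ∈ A1 \ T.erase t0, x i ≤ z :=
            fun i hi => ((hA1mem i).mp (Finset.mem_sdiff.mp hi).1).1
          have hcount := count_pos_of_sum (A1 \ T.erase t0) x z r hzle (by omega) (by omega)
          have hfle : ((A1 \ T.erase t0).filter (fun i => 0 < x i)).card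
              ≤ (A1 \ T.erase t0).card := Finset.card_filter_le _ _
          have hcard' : (A1 \ T.erase t0).card + (th - 1) = A1.card := by
            rw [Finset.card_sdiff_of_subset hT'sub, hT'card]
            have := Finset.card_le_card hT'sub
            omega
          omega
      set hcv := max 1 (S + 2 - (r*z + r + m)) with hcv_def
      set hL := min (th + 1) hcv with hL_def
      obtain ⟨lam, hlamF', hlam1, hlam2, hlam3⟩ := hpick hL (by omega) (by omega)
      set h := max (lam - β) hL with hh_def
      have hhS : h + r*z ≤ S := by
        by_cases hS1 : hL ≤ a
        · have hla : lam = a := hlam3 hS1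
          omega
        · omega
      have hhbr : h ≤ b + r := by omega
      have himA1 : i_m ∉ A1 := by
        rw [hA1_def]
        exact Finset.notMem_erase _ _
      -- dispatch on mode
      by_cases hCmode : hcv ≤ h
      · -- C'' mode : plain decrement with a δ-drop at i_m
        set δ := min m (S + 1 - (r*z + h)) with hδ_def
        have hδ1 : 1 ≤ δ := by omega
        obtain ⟨T', hT'A1, hT'card⟩ := Finset.exists_subset_card_eq (s := A1) (n := (h - 1)) (by omega)
        set HA := insert i_m T' with hHA_def
        have himT' : i_m ∉ T' := fun hc => himA1 (hT'A1 hc)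
        have hHAcard : HA.card = h := by
          rw [hHA_def, Finset.card_insert_of_notMem himT', hT'card]
          omega
        have hHAsub : HA ⊆ Bᶜ := by
          rw [hHA_def, hBcA0]
          intro i hi
          rcases Finset.mem_insert.mp hi with rfl | hi2
          · exact himA0
          · exact hA1sub (hT'A1 hi2)
        have hBcHA : Bᶜ \ HA = A1 \ T' := by
          rw [hBcA0, hHA_def, hA1_def]
          ext i
          simp only [Finset.mem_sdiff, Finset.mem_insert, Finset.mem_erase]
          constructor
          · rintro ⟨h1', h2⟩
            push_neg at h2
            exact ⟨⟨h2.1, h1'⟩, h2.2⟩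
          · rintro ⟨⟨h1', h2⟩, h3⟩
            push_neg
            exact ⟨h2, h1', h3⟩
        set w := fun i => if i = i_m then m - δ else x i - 1 with hw_def
        have hT'z : ∀ i ∈ T', x i ≤ z := fun i hi => ((hA1mem i).mp (hT'A1 hi)).1
        have hsumT' : ∑ i ∈ T', (x i - 1) + (h - 1) = ∑ i ∈ T', x i := by
          rw [← hT'card, Finset.card_eq_sum_ones, ← Finset.sum_add_distrib]
          apply Finset.sum_congr rfl
          intro i hi
          have := hmle i
          omega
        have hS0T' : (∑ i ∈ A1 \ T', x i) + ∑ i ∈ T', x i + m = S := by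
          have := Finset.sum_sdiff (f := x) hT'A1
          omega
        have hwHA : ∑ i ∈ HA, w i = (m - δ) + ∑ i ∈ T', (x i - 1) := by
          rw [hHA_def, Finset.sum_insert himT', hw_def]
          simp only [if_pos rfl]
          congr 1
          apply Finset.sum_congr rfl
          intro i hi
          have : i ≠ i_m := fun hc => himT' (hc ▸ hi)
          simp [this]
        obtain ⟨x', hmove, htet, hHAeq, hrest⟩ :=
          branch_finish a (by omega) hedge hcard x z B HA r lam (lam - h) hlamF' hHAsub
            (by rw [hHAcard]; omega)
            (by rw [hBcard]; omega)
            w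
            (by
              intro i hi
              rw [hHA_def] at hi
              rcases Finset.mem_insert.mp hi with rfl | hi2
              · simp only [hw_def, if_pos rfl, him]
                omega
              · have : i ≠ i_m := fun hc => himT' (hc ▸ hi2)
                simp only [hw_def, if_neg this]
                have := hmle i
                omega)
            (by
              intro i hi
              rw [hHA_def] at hi
              rcases Finset.mem_insert.mp hi with rfl | hi2
              · simp only [hw_def, if_pos rfl]
                omega
              · have : i ≠ i_m := fun hc => himT' (hc ▸ hi2)
                simp only [hw_def, if_neg this]
                have := hT'z i hi2
                omega)
            hxB
            (fun i hi _ => (hA0mem i).mp (hBcA0 ▸ hi))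
            hr1 (by omega)
            (by rw [hBcHA, hwHA]; omega)
            (by rw [hBcHA, hwHA]; omega)
        refine ⟨x', hmove, ?_, htet⟩
        have him' : x' i_m = m - δ := by
          rw [hHAeq i_m (by rw [hHA_def]; exact Finset.mem_insert_self _ _), hw_def]
          simp
        have hlow : ∀ i, m - δ ≤ x' i := by
          intro i
          by_cases hi : i ∈ HA
          · rw [hHAeq i hi, hw_def]
            by_cases hii : i = i_m
            · simp [hii]
            · simp only [if_neg hii]
              have := hmle i
              omega
          · rcases hrest i hi with h3 | ⟨h3, h4⟩
            · have := hmle i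
              omega
            · have := hxB i h3
              omega
        have hdom : ∀ i, x i - m ≤ x' i - (m - δ) := by
          intro i
          by_cases hi : i ∈ HA
          · rw [hHAeq i hi, hw_def]
            by_cases hii : i = i_m
            · subst hii
              rw [him]
              simp
            · simp only [if_neg hii]
              have := hmle i
              omega
          · rcases hrest i hi with h3 | ⟨h3, h4⟩
            · rw [h3]
              omega
            · rw [h4]
              have := hxB i h3
              omega
        exact long_transfer hcard1 x x' m δ i_m hm_def.symm hδ1 him' hlow hdom hlong
      · -- Z* mode : zero out i_m, fill the rest
        push_neg at hCmode
        have hLth : hL = th + 1 := by omega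
        have hth_h : th ≤ h - 1 := by omega
        have hZfeas : h + (r*z + m) ≤ S + 1 := by omega
        obtain ⟨T', hTT', hT'A1, hT'card0⟩ :=
          Finset.exists_subsuperset_card_eq hTsub (n := h - 1 - th + T.card) (by omega) (by omega)
        have hT'card : T'.card = h - 1 := by omega
        set HA := insert i_m T' with hHA_def
        have himT' : i_m ∉ T' := fun hc => himA1 (hT'A1 hc)
        have hHAcard : HA.card = h := by
          rw [hHA_def, Finset.card_insert_of_notMem himT', hT'card]
          omega
        have hHAsub : HA ⊆ Bᶜ := by
          rw [hHA_def, hBcA0]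
          intro i hi
          rcases Finset.mem_insert.mp hi with rfl | hi2
          · exact himA0
          · exact hA1sub (hT'A1 hi2)
        have hBcHA : Bᶜ \ HA = A1 \ T' := by
          rw [hBcA0, hHA_def, hA1_def]
          ext i
          simp only [Finset.mem_sdiff, Finset.mem_insert, Finset.mem_erase]
          constructor
          · rintro ⟨h1', h2⟩
            push_neg at h2
            exact ⟨⟨h2.1, h1'⟩, h2.2⟩
          · rintro ⟨⟨h1', h2⟩, h3⟩
            push_neg
            exact ⟨h2, h1', h3⟩
        have hS0le : ∑ i ∈ A1 \ T', x i ≤ r*z + (r-1) := by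
          apply le_trans (Finset.sum_le_sum_of_subset ?_) hTrem
          exact Finset.sdiff_subset_sdiff (Finset.Subset.refl _) hTT'
        set S0 := ∑ i ∈ A1 \ T', x i with hS0_def
        have hT'z : ∀ i ∈ T', x i ≤ z := fun i hi => ((hA1mem i).mp (hT'A1 hi)).1
        have hsumT' : ∑ i ∈ T', (x i - 1) + (h - 1) = ∑ i ∈ T', x i := by
          rw [← hT'card, Finset.card_eq_sum_ones, ← Finset.sum_add_distrib]
          apply Finset.sum_congr rfl
          intro i hi
          have := hmle i
          omega
        have hS0T' : S0 + ∑ i ∈ T', x i + m = S := by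
          have := Finset.sum_sdiff (f := x) hT'A1
          omega
        have hHAsd : HA \ {i_m} = T' := by
          rw [hHA_def]
          ext i
          simp only [Finset.mem_sdiff, Finset.mem_insert, Finset.mem_singleton]
          constructor
          · rintro ⟨h1' | h1', h2⟩
            · exact absurd h1' h2
            · exact h1'
          · intro h1'
            exact ⟨Or.inr h1', fun hc => himT' (hc ▸ h1')⟩
        have hcapsum : ∑ i ∈ HA \ {i_m}, (x i - 1) = ∑ i ∈ T', (x i - 1) := by
          rw [hHAsd]
        have hτfeas : max (r*z) S0 - S0 ≤ ∑ i ∈ HA \ {i_m}, (fun i => x i - 1) i := by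
          simp only []
          rw [hcapsum]
          omega
        obtain ⟨w, hwstar, hwle, hwsum⟩ := exists_w_zero HA i_m
          (by rw [hHA_def]; exact Finset.mem_insert_self _ _) (fun i => x i - 1)
          (max (r*z) S0 - S0) hτfeas
        obtain ⟨x', hmove, htet, hHAeq, hrest⟩ :=
          branch_finish a (by omega) hedge hcard x z B HA r lam (lam - h) hlamF' hHAsub
            (by rw [hHAcard]; omega)
            (by rw [hBcard]; omega)
            w
            (by
              intro i hi
              have := hwle i
              have := hmle i
              omega)
            (by
              intro i hi
              have := hwle i
              rw [hHA_def] at hi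
              rcases Finset.mem_insert.mp hi with rfl | hi2
              · omega
              · have := hT'z i hi2
                omega)
            hxB
            (fun i hi _ => (hA0mem i).mp (hBcA0 ▸ hi))
            hr1 (by omega)
            (by rw [hBcHA, hwsum, ← hS0_def]; omega)
            (by rw [hBcHA, hwsum, ← hS0_def]; omega)
        exact ⟨x', hmove, long_of_zero x' i_m (by
          rw [hHAeq i_m (by rw [hHA_def]; exact Finset.mem_insert_self _ _), hwstar]), htet⟩
    · have hd1 : 1 ≤ d := by omega
      have hβeq : β = a - 1 := by omega
      have hreq : r = 1 := by omega
      by_cases hdb2 : d = b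
      · -- Branch M1c : d = b, all coordinates but i_m are large
        have hA0card1 : A0.card = 1 := by omega
        have hA0sing : A0 = {i_m} := by
          apply Finset.eq_singleton_iff_unique_mem.mpr
          refine ⟨himA0, fun j hj => ?_⟩
          exact Finset.card_le_one.mp (le_of_eq hA0card1) j hj i_m himA0
        have hSm : S = m := by
          rw [hS_def, hA0sing, Finset.sum_singleton, him]
        obtain ⟨istar, histar⟩ : ∃ i, i ∈ D0 := by
          have : 0 < D0.card := by omega
          obtain ⟨i, hi⟩ := Finset.card_pos.mp this
          exact ⟨i, hi⟩
        have hD0sdcard : (D0 \ {istar}).card = d - 1 := by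
          rw [Finset.card_sdiff_of_subset (Finset.singleton_subset_iff.mpr histar), Finset.card_singleton]
        have hfeas : z - m ≤ ∑ i ∈ D0 \ {istar}, (fun _ => z) i := by
          have : ∑ i ∈ D0 \ {istar}, (fun _ => z) i = (d-1) * z := by
            rw [Finset.sum_const, hD0sdcard, smul_eq_mul]
          rw [this]
          have : 1 * z ≤ (d-1) * z := Nat.mul_le_mul_right z (by omega)
          omega
        obtain ⟨w, hwstar, hwle, hwsum⟩ := exists_w_zero D0 istar histar (fun _ => z) (z - m) hfeas
        obtain ⟨x', hmove, htet, hHAeq, _⟩ :=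
          branch_finish a (by omega) hedge hcard x z B D0 r b 0 hedgeb hD0sub
            (by rw [zero_add]; omega) (Nat.zero_le _) w
            (fun i hi => lt_of_le_of_lt (hwle i) ((hD0mem i).mp hi).1)
            (fun i hi => hwle i) hxB
            (fun i hi hni => (hA0mem i).mp (hsplitBc ▸ Finset.mem_sdiff.mpr ⟨hi, hni⟩))
            hr1 (by omega)
            (by rw [hsplitBc, ← hS_def, hSm, hwsum, hreq]; omega)
            (by rw [hsplitBc, ← hS_def, hSm, hwsum, hreq]; omega)
        exact ⟨x', hmove, long_of_zero x' istar (by rw [hHAeq istar histar, hwstar]), htet⟩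
      · -- Branch M1b : m ≥ 1, 1 ≤ d ≤ b-1
        set A1 := A0.erase i_m with hA1_def
        have hA1sub : A1 ⊆ A0 := Finset.erase_subset _ _
        have hA0pos : 1 ≤ A0.card := Finset.card_pos.mpr ⟨i_m, himA0⟩
        have hA1card : A1.card + 1 = A0.card := by
          rw [hA1_def, Finset.card_erase_of_mem himA0]
          omega
        have hA1mem : ∀ i, i ∈ A1 ↔ (x i ≤ z ∧ i ≠ i_m) := by
          intro i
          rw [hA1_def, Finset.mem_erase, hA0mem]
          tauto
        have hPred : ∃ t : ℕ, ∃ T : Finset (Fin n),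
            T ⊆ A1 ∧ T.card = t ∧ ∑ i ∈ A1 \ T, x i ≤ z :=
          ⟨A1.card, A1, Finset.Subset.refl _, rfl, by simp⟩
        set th := Nat.find hPred with hth_def
        obtain ⟨T, hTsub, hTcard, hTrem⟩ := Nat.find_spec hPred
        rw [← hth_def] at hTcard
        have hTz : ∀ i ∈ T, x i ≤ z := fun i hi => ((hA1mem i).mp (hTsub hi)).1
        have hthb : d + 1 + th ≤ b := by
          rcases Nat.eq_zero_or_pos th with h0 | hpos'
          · omega
          · have hTne : T.Nonempty := Finset.card_pos.mp (by omega)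
            obtain ⟨t0, ht0⟩ := hTne
            have hT'sub : T.erase t0 ⊆ A1 := (Finset.erase_subset _ _).trans hTsub
            have hT'card : (T.erase t0).card = th - 1 := by
              rw [Finset.card_erase_of_mem ht0, hTcard]
            have hnot := Nat.find_min hPred (m := th - 1) (by omega)
            push_neg at hnot
            have hbig := hnot (T.erase t0) hT'sub hT'card
            have hzle : ∀ i ∈ A1 \ T.erase t0, x i ≤ z :=
              fun i hi => ((hA1mem i).mp (Finset.mem_sdiff.mp hi).1).1
            have hcount := count_pos_of_sum (A1 \ T.erase t0) x z 1 hzle (by omega)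
              (by omega)
            have hfle : ((A1 \ T.erase t0).filter (fun i => 0 < x i)).card
                ≤ (A1 \ T.erase t0).card := Finset.card_filter_le _ _
            have hcard' : (A1 \ T.erase t0).card + (th - 1) = A1.card := by
              rw [Finset.card_sdiff_of_subset hT'sub, hT'card]
              have := Finset.card_le_card hT'sub
              omega
            omega
        set h := d + 1 + th with hh_def
        obtain ⟨lam, hlamF', hlam1, hlam2, hlam3⟩ := hpick h (by omega) (by omega)
        set pad := lam - h with hpad_def
        set HA := insert i_m (D0 ∪ T) with hHA_def
        have himD0 : i_m ∉ D0 := by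
          rw [hD0mem]
          push_neg
          intro hcon
          omega
        have himT : i_m ∉ T := fun hc => ((hA1mem i_m).mp (hTsub hc)).2 rfl
        have hTD0 : Disjoint D0 T := by
          rw [Finset.disjoint_left]
          intro i hi1 hi2
          have := ((hD0mem i).mp hi1).1
          have := hTz i hi2
          omega
        have hHAcard : HA.card = h := by
          rw [hHA_def, Finset.card_insert_of_notMem (by
            simp only [Finset.mem_union]
            push_neg
            exact ⟨himD0, himT⟩), Finset.card_union_of_disjoint hTD0, hTcard]
          omega
        have hHAsub : HA ⊆ Bᶜ := by
          rw [hHA_def]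
          intro i hi
          rcases Finset.mem_insert.mp hi with rfl | hi2
          · exact Finset.mem_compl.mpr himB
          · rcases Finset.mem_union.mp hi2 with h3 | h3
            · exact hD0sub h3
            · exact hA0sub (hA1sub (hTsub h3))
        have hBcHA : Bᶜ \ HA = A1 \ T := by
          ext i
          simp only [Finset.mem_sdiff, Finset.mem_compl, hHA_def, Finset.mem_insert,
            Finset.mem_union, hA1mem i]
          constructor
          · rintro ⟨h1, h2⟩
            push_neg at h2
            obtain ⟨h3, h4, h5⟩ := h2
            refine ⟨⟨?_, h3⟩, h5⟩
            by_contra hcon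
            push_neg at hcon
            exact h4 ((hD0mem i).mpr ⟨hcon, h1⟩)
          · rintro ⟨⟨h1, h2⟩, h3⟩
            have hiB : i ∉ B := by
              intro hc
              have := hxB i hc
              omega
            refine ⟨hiB, ?_⟩
            push_neg
            refine ⟨h2, ?_, h3⟩
            intro hc
            have := ((hD0mem i).mp hc).1
            omega
        have hS0 : ∑ i ∈ Bᶜ \ HA, x i ≤ z := by
          rw [hBcHA]
          exact hTrem
        set cap := fun i => if i ∈ D0 then z else x i - 1 with hcap_def
        have hsumT : ∑ i ∈ T, (x i - 1) + th = ∑ i ∈ T, x i := by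
          rw [← hTcard, Finset.card_eq_sum_ones, ← Finset.sum_add_distrib]
          apply Finset.sum_congr rfl
          intro i hi
          have := hmle i
          omega
        have hHAsd : HA \ {i_m} = D0 ∪ T := by
          rw [hHA_def]
          ext i
          simp only [Finset.mem_sdiff, Finset.mem_insert, Finset.mem_union, Finset.mem_singleton]
          constructor
          · rintro ⟨h1 | h1, h2⟩
            · exact absurd h1 h2
            · exact h1
          · intro h1
            have : i ≠ i_m := by
              rintro rfl
              rcases h1 with h2 | h2
              · exact himD0 h2
              · exact himT h2
            exact ⟨Or.inr h1, this⟩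
        have hcapsum : ∑ i ∈ HA \ {i_m}, cap i = d * z + ∑ i ∈ T, (x i - 1) := by
          rw [hHAsd, Finset.sum_union hTD0]
          congr 1
          · rw [Finset.sum_congr rfl (fun i hi => show cap i = z by
              simp only [hcap_def, if_pos hi])]
            simp [mul_comm, hd_def]
          · apply Finset.sum_congr rfl
            intro i hi
            have : i ∉ D0 := Finset.disjoint_right.mp hTD0 hi
            simp only [hcap_def, if_neg this]
        have hτfeas : z - (∑ i ∈ Bᶜ \ HA, x i) ≤ ∑ i ∈ HA \ {i_m}, cap i := by
          rw [hcapsum]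
          have h1z : 1 * z ≤ d * z := Nat.mul_le_mul_right z (by omega)
          omega
        obtain ⟨w, hwstar, hwle, hwsum⟩ := exists_w_zero HA i_m
          (by rw [hHA_def]; exact Finset.mem_insert_self _ _) cap
          (z - ∑ i ∈ Bᶜ \ HA, x i) hτfeas
        have hwx : ∀ i ∈ HA, w i < x i := by
          intro i hi
          have hle := hwle i
          by_cases hiD : i ∈ D0
          · have := ((hD0mem i).mp hiD).1
            simp only [hcap_def, if_pos hiD] at hle
            omega
          · simp only [hcap_def, if_neg hiD] at hle
            have := hmle i
            omega
        have hwz : ∀ i ∈ HA, w i ≤ z := by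
          intro i hi
          have hle := hwle i
          by_cases hiD : i ∈ D0
          · simp only [hcap_def, if_pos hiD] at hle
            omega
          · simp only [hcap_def, if_neg hiD] at hle
            have hiA0 : x i ≤ z := by
              rw [hHA_def] at hi
              rcases Finset.mem_insert.mp hi with rfl | hi2
              · omega
              · rcases Finset.mem_union.mp hi2 with h3 | h3
                · exact absurd h3 hiD
                · exact hTz i h3
            omega
        obtain ⟨x', hmove, htet, hHAeq, _⟩ :=
          branch_finish a (by omega) hedge hcard x z B HA r lam pad hlamF' hHAsub
            (by rw [hHAcard]; omega)
            (by rw [hBcard]; omega)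
            w hwx hwz hxB
            (fun i hi hni => (hA0mem i).mp (hsplitBc ▸ Finset.mem_sdiff.mpr ⟨hi, fun hD =>
              hni (by rw [hHA_def]; exact Finset.mem_insert_of_mem (Finset.mem_union_left _ hD))⟩))
            hr1 (by omega)
            (by rw [hwsum, hreq]; omega)
            (by rw [hwsum, hreq]; omega)
        exact ⟨x', hmove, long_of_zero x' i_m (by
          rw [hHAeq i_m (by rw [hHA_def]; exact Finset.mem_insert_self _ _), hwstar]), htet⟩
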